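/- Let γ, ρ, α_s, α_l, k_s, k_l, q₀ be positive real constants, T₀ a real constant, and λ > 0. Define T_k = F(λ) = T₀ + (γρα_l/k_l) Q((√α_s/√α_l)λ) − (q₀/k_l)√(α_l π) e^{−λ²} F₁((√α_s/√α_l)λ) and T₁ = T_k − (q₀/k_s)√(π α_s) erf(λ). Then G(λ) = T_k, where G(x) = [γρα_sα_l Q₁(x) Q((√α_s/√α_l)x) + T₁ k_s α_l Q((√α_s/√α_l)x) + T₀ k_l α_s Q₁(x)] / [k_s α_l Q((√α_s/√α_l)x) + k_l α_s Q₁(x)]. -/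

import Mathlib

open Real Filter Set

/-- Gauss error function `erf x = (2/√π) ∫₀ˣ e^{−t²} dt`. -/
noncomputable def erf (x : ℝ) : ℝ := (2 / Real.sqrt π) * ∫ t in (0:ℝ)..x, Real.exp (-t ^ 2)

/-- Complementary error function. -/
noncomputable def erfc (x : ℝ) : ℝ := 1 - erf x

/-- `Q(x) = √π · x · e^{x²} · erfc(x)`. -/
noncomputable def Qf (x : ℝ) : ℝ := Real.sqrt π * x * Real.exp (x ^ 2) * erfc x

/-- `Q₁(x) = √π · x · e^{x²} · erf(x)`. -/
noncomputable def Q1f (x : ℝ) : ℝ := Real.sqrt π * x * Real.exp (x ^ 2) * erf x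

/-- `F₁(x) = erfc(x) · e^{x²}`. -/
noncomputable def F1f (x : ℝ) : ℝ := erfc x * Real.exp (x ^ 2)

/-- `F(x) = T₀ + (γρα_l/k_l)·Q((√α_s/√α_l)x) − (q₀/k_l)·√(α_l π)·e^{−x²}·F₁((√α_s/√α_l)x)`. -/
noncomputable def Ff (γ ρ αs αl kl q₀ T₀ : ℝ) (x : ℝ) : ℝ :=
  T₀ + (γ * ρ * αl / kl) * Qf ((Real.sqrt αs / Real.sqrt αl) * x)
    - (q₀ / kl) * Real.sqrt (αl * π) * Real.exp (-x ^ 2)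
        * F1f ((Real.sqrt αs / Real.sqrt αl) * x)

/-- The Rubinstein function `G` with fixed-face temperature `T₁`. -/
noncomputable def Gf (γ ρ αs αl ks kl T₀ T₁ : ℝ) (x : ℝ) : ℝ :=
  (γ * ρ * αs * αl * Q1f x * Qf ((Real.sqrt αs / Real.sqrt αl) * x)
      + T₁ * ks * αl * Qf ((Real.sqrt αs / Real.sqrt αl) * x)
      + T₀ * kl * αs * Q1f x)
    / (ks * αl * Qf ((Real.sqrt αs / Real.sqrt αl) * x) + kl * αs * Q1f x)

lemma gauss_cont : Continuous fun t : ℝ => Real.exp (-t ^ 2) :=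
  Real.continuous_exp.comp (continuous_pow 2).neg

lemma erf_pos' {x : ℝ} (hx : 0 < x) : 0 < erf x := by
  have h : 0 < ∫ t in (0:ℝ)..x, Real.exp (-t ^ 2) := by
    apply intervalIntegral.intervalIntegral_pos_of_pos_on
    · exact (gauss_cont.intervalIntegrable 0 x)
    · intro t _; exact Real.exp_pos _
    · exact hx
  have hπ : 0 < Real.sqrt π := Real.sqrt_pos.mpr Real.pi_pos
  exact mul_pos (by positivity) h

lemma erf_le_one' {x : ℝ} (hx : 0 ≤ x) : erf x ≤ 1 := by
  have hI : (∫ t in (0:ℝ)..x, Real.exp (-t ^ 2)) ≤ Real.sqrt π / 2 := by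
    rw [intervalIntegral.integral_of_le hx]
    have h1 : (∫ t in Set.Ioc (0:ℝ) x, Real.exp (-t ^ 2))
        ≤ ∫ t in Set.Ioi (0:ℝ), Real.exp (-t ^ 2) := by
      apply MeasureTheory.setIntegral_mono_set
      · have := (integrable_exp_neg_mul_sq (by norm_num : (0:ℝ) < 1)).integrableOn
          (s := Set.Ioi (0:ℝ))
        simpa using this
      · filter_upwards with t using (Real.exp_pos _).le
      · exact HasSubset.Subset.eventuallyLE Set.Ioc_subset_Ioi_self
    have h2 : (∫ t in Set.Ioi (0:ℝ), Real.exp (-t ^ 2)) = Real.sqrt π / 2 := by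
      have := integral_gaussian_Ioi 1
      simpa using this
    linarith
  have hπ : 0 < Real.sqrt π := Real.sqrt_pos.mpr Real.pi_pos
  rw [erf]
  rw [div_mul_eq_mul_div, div_le_one hπ]
  nlinarith

lemma erfc_nonneg' {x : ℝ} (hx : 0 ≤ x) : 0 ≤ erfc x := by
  have := erf_le_one' hx; rw [erfc]; linarith

/-- With `T_k = F(λ)` and `T₁ = T_k − (q₀/k_s)√(π α_s) erf(λ)`, one has `G(λ) = T_k`. -/
theorem G_eq_Tk_heat_flux (γ ρ αs αl ks kl q₀ T₀ lam : ℝ)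
    (hγ : 0 < γ) (hρ : 0 < ρ) (hαs : 0 < αs) (hαl : 0 < αl)
    (hks : 0 < ks) (hkl : 0 < kl) (hq₀ : 0 < q₀) (hlam : 0 < lam) :
    Gf γ ρ αs αl ks kl T₀
        (Ff γ ρ αs αl kl q₀ T₀ lam - (q₀ / ks) * Real.sqrt (π * αs) * erf lam) lam
      = Ff γ ρ αs αl kl q₀ T₀ lam := by
  have hsl : 0 < Real.sqrt αl := Real.sqrt_pos.mpr hαl
  have hss : 0 < Real.sqrt αs := Real.sqrt_pos.mpr hαs
  have hsπ : 0 < Real.sqrt π := Real.sqrt_pos.mpr Real.pi_pos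
  set y : ℝ := Real.sqrt αs / Real.sqrt αl * lam with hy
  have hy0 : 0 < y := by positivity
  have hQ : 0 ≤ Qf y := by
    rw [Qf]
    have := erfc_nonneg' hy0.le
    positivity
  have hQ1 : 0 < Q1f lam := by
    rw [Q1f]
    have := erf_pos' hlam
    positivity
  have hD : ks * αl * Qf y + kl * αs * Q1f lam ≠ 0 := by positivity
  have hS : Real.sqrt (π * αs) * erf lam * αl * Qf y
      = Real.sqrt (αl * π) * Real.exp (-lam ^ 2) * F1f y * αs * Q1f lam := by
    rw [Qf, F1f, Q1f, Real.sqrt_mul Real.pi_pos.le, Real.sqrt_mul hαl.le]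
    have hexp : Real.exp (-lam ^ 2) * Real.exp (lam ^ 2) = 1 := by
      rw [← Real.exp_add]; simp
    have h1 : Real.sqrt αs * Real.sqrt αs = αs := Real.mul_self_sqrt hαs.le
    have h2 : Real.sqrt αl * Real.sqrt αl = αl := Real.mul_self_sqrt hαl.le
    have key : Real.sqrt αs * αl * y = Real.sqrt αl * αs * lam := by
      rw [hy]; field_simp
      linear_combination αl * h1 - αs * h2
    linear_combination (Real.sqrt π * Real.sqrt π * erf lam * Real.exp (y ^ 2) * erfc y) * key
      - (Real.sqrt π * Real.sqrt π * Real.sqrt αl * αs * lam * erf lam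
          * Real.exp (y ^ 2) * erfc y) * hexp
  set Tk := Ff γ ρ αs αl kl q₀ T₀ lam with hTk
  have hTk' : kl * Tk = kl * T₀ + γ * ρ * αl * Qf y
      - q₀ * Real.sqrt (αl * π) * Real.exp (-lam ^ 2) * F1f y := by
    rw [hTk, Ff, ← hy]; field_simp
  have hinv : ks * ks⁻¹ = 1 := mul_inv_cancel₀ hks.ne'
  rw [Gf, ← hy, div_eq_iff hD]
  linear_combination (-(αs * Q1f lam)) * hTk' - q₀ * hS
    - (q₀ * Real.sqrt (π * αs) * erf lam * αl * Qf y) * hinv
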